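/- For all natural numbers k, ℓ, m, n with k ≤ n, ℓ ≤ m and k * m = ℓ * n, there exists a (k, ℓ)-biregular bipartite graph on a bipartition (P, Q) with |P| = m and |Q| = n. -/

import Mathlib

private lemma aux_mod_inj {n c s t : ℕ} (hs : s < n) (ht : t < n)
    (h : (c + s) % n = (c + t) % n) : s = t := by
  have h1 : s % n = t % n := Nat.ModEq.add_left_cancel' c h
  rwa [Nat.mod_eq_of_lt hs, Nat.mod_eq_of_lt ht] at h1

private lemma aux_div_lt {k x y : ℕ} (hk : 0 < k) (hxy : x + k ≤ y) :
    x / k < y / k := by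
  have h1 : (x + k) / k = x / k + 1 := Nat.add_div_right x hk
  have h2 : (x + k) / k ≤ y / k := Nat.div_le_div_right hxy
  omega

/-- For all `k ≤ n`, `ℓ ≤ m` with `k * m = ℓ * n`, there exists a
`(k, ℓ)`-biregular bipartite graph on a bipartition `(P, Q)` with `|P| = m`
and `|Q| = n`. -/
theorem stmt_4 (k ℓ m n : ℕ) (hk : k ≤ n) (hl : ℓ ≤ m) (h : k * m = ℓ * n) :
    ∃ G : SimpleGraph (Fin m ⊕ Fin n),
      (∀ a b : Fin m, ¬ G.Adj (Sum.inl a) (Sum.inl b)) ∧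
      (∀ a b : Fin n, ¬ G.Adj (Sum.inr a) (Sum.inr b)) ∧
      (∀ a : Fin m, Nat.card {b : Fin n | G.Adj (Sum.inl a) (Sum.inr b)} = k) ∧
      (∀ b : Fin n, Nat.card {a : Fin m | G.Adj (Sum.inl a) (Sum.inr b)} = ℓ) := by
  classical
  set A : Fin m ⊕ Fin n → Fin m ⊕ Fin n → Prop := fun u v =>
    match u, v with
    | Sum.inl a, Sum.inr b => ∃ t < k, ((a : ℕ) * k + t) % n = (b : ℕ)
    | Sum.inr b, Sum.inl a => ∃ t < k, ((a : ℕ) * k + t) % n = (b : ℕ)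
    | _, _ => False with hA
  have hsymm : Symmetric A := by
    intro u v huv
    cases u <;> cases v <;> simp_all [hA]
  have hloop : Irreflexive A := by
    intro u
    cases u <;> simp [hA]
  refine ⟨⟨A, ⟨hsymm⟩, ⟨hloop⟩⟩, ?_, ?_, ?_, ?_⟩
  · intro a b; simp [hA]
  · intro a b; simp [hA]
  · -- degree of left vertex a is k
    intro a
    rcases Nat.eq_zero_or_pos k with hk0 | hkpos
    · have : {b : Fin n | A (Sum.inl a) (Sum.inr b)} = ∅ := by
        ext b; simp [hA, hk0]
      simp [SimpleGraph.Adj, this, hk0]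
    · have hn : 0 < n := lt_of_lt_of_le hkpos hk
      set f : Fin k → Fin n := fun t => ⟨((a : ℕ) * k + t) % n, Nat.mod_lt _ hn⟩ with hf
      have hinj : Function.Injective f := by
        intro s t hst
        have hv : ((a : ℕ) * k + s) % n = ((a : ℕ) * k + t) % n := by
          simpa [hf, Fin.ext_iff] using hst
        exact Fin.ext (aux_mod_inj (lt_of_lt_of_le s.isLt hk) (lt_of_lt_of_le t.isLt hk) hv)
      have hset : {b : Fin n | A (Sum.inl a) (Sum.inr b)} = Set.range f := by
        ext b
        simp only [hA, Set.mem_setOf_eq, Set.mem_range, hf]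
        constructor
        · rintro ⟨t, ht, hmod⟩
          exact ⟨⟨t, ht⟩, Fin.ext hmod⟩
        · rintro ⟨t, rfl⟩
          exact ⟨t, t.isLt, rfl⟩
      rw [show {b : Fin n | (SimpleGraph.mk A ⟨hsymm⟩ ⟨hloop⟩).Adj (Sum.inl a) (Sum.inr b)}
            = Set.range f from hset,
        Nat.card_range_of_injective hinj, Nat.card_eq_fintype_card, Fintype.card_fin]
  · -- degree of right vertex b is ℓ
    intro b
    have hn : 0 < n := b.pos
    rcases Nat.eq_zero_or_pos k with hk0 | hkpos
    · have hl0 : ℓ = 0 := by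
        have := h; rw [hk0] at this; simp at this; omega
      have : {a : Fin m | A (Sum.inl a) (Sum.inr b)} = ∅ := by
        ext a; simp [hA, hk0]
      simp [SimpleGraph.Adj, this, hl0]
    · have hbound : ∀ j : Fin ℓ, ((b : ℕ) + (j : ℕ) * n) / k < m := by
        intro j
        rw [Nat.div_lt_iff_lt_mul hkpos]
        have h1 : ((j : ℕ) + 1) * n ≤ ℓ * n := Nat.mul_le_mul_right n j.isLt
        have h2 : ((j : ℕ) + 1) * n = (j : ℕ) * n + n := by ring
        have h3 : (b : ℕ) < n := b.isLt
        have h4 : ℓ * n = m * k := by rw [← h]; ring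
        omega
      set f : Fin ℓ → Fin m := fun j => ⟨((b : ℕ) + (j : ℕ) * n) / k, hbound j⟩ with hf
      have hinj : Function.Injective f := by
        intro j1 j2 hj
        have hv : ((b : ℕ) + (j1 : ℕ) * n) / k = ((b : ℕ) + (j2 : ℕ) * n) / k := by
          simpa [hf, Fin.ext_iff] using hj
        by_contra hne
        rcases lt_trichotomy (j1 : ℕ) (j2 : ℕ) with hlt | heq | hlt
        · have hle : ((j1 : ℕ) + 1) * n ≤ (j2 : ℕ) * n := Nat.mul_le_mul_right n hlt
          have : ((b : ℕ) + (j1 : ℕ) * n) + k ≤ (b : ℕ) + (j2 : ℕ) * n := by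
            have h2 : ((j1 : ℕ) + 1) * n = (j1 : ℕ) * n + n := by ring
            omega
          exact absurd hv (ne_of_lt (aux_div_lt hkpos this))
        · exact hne (Fin.ext heq)
        · have hle : ((j2 : ℕ) + 1) * n ≤ (j1 : ℕ) * n := Nat.mul_le_mul_right n hlt
          have : ((b : ℕ) + (j2 : ℕ) * n) + k ≤ (b : ℕ) + (j1 : ℕ) * n := by
            have h2 : ((j2 : ℕ) + 1) * n = (j2 : ℕ) * n + n := by ring
            omega
          exact absurd hv.symm (ne_of_lt (aux_div_lt hkpos this))
      have hset : {a : Fin m | A (Sum.inl a) (Sum.inr b)} = Set.range f := by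
        ext a
        simp only [hA, Set.mem_setOf_eq, Set.mem_range, hf]
        constructor
        · rintro ⟨t, ht, hmod⟩
          set x : ℕ := (a : ℕ) * k + t with hx
          have hxlt : x < m * k := by
            have h1 : ((a : ℕ) + 1) * k ≤ m * k := Nat.mul_le_mul_right k a.isLt
            have h2 : ((a : ℕ) + 1) * k = (a : ℕ) * k + k := by ring
            omega
          have hxmod : x % n = (b : ℕ) := hmod
          have hxdecomp : n * (x / n) + (b : ℕ) = x := by
            conv_rhs => rw [← Nat.div_add_mod x n]
            rw [hxmod]
          have hjlt : x / n < ℓ := by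
            have hmk : m * k = ℓ * n := by rw [← h]; ring
            rw [Nat.div_lt_iff_lt_mul hn]; omega
          refine ⟨⟨x / n, hjlt⟩, Fin.ext ?_⟩
          show ((b : ℕ) + (x / n) * n) / k = (a : ℕ)
          have hbx : (b : ℕ) + (x / n) * n = x := by rw [Nat.mul_comm]; omega
          rw [hbx, hx]
          rw [Nat.mul_comm (a : ℕ) k, Nat.mul_add_div hkpos, Nat.div_eq_of_lt ht]
          omega
        · rintro ⟨j, rfl⟩
          set x : ℕ := (b : ℕ) + (j : ℕ) * n with hx
          refine ⟨x % k, Nat.mod_lt _ hkpos, ?_⟩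
          show (x / k * k + x % k) % n = (b : ℕ)
          have h1 : x / k * k + x % k = x := by
            rw [Nat.mul_comm]; exact Nat.div_add_mod x k
          rw [h1, hx, Nat.add_mul_mod_self_right, Nat.mod_eq_of_lt b.isLt]
      rw [show {a : Fin m | (SimpleGraph.mk A ⟨hsymm⟩ ⟨hloop⟩).Adj (Sum.inl a) (Sum.inr b)}
            = Set.range f from hset,
        Nat.card_range_of_injective hinj, Nat.card_eq_fintype_card, Fintype.card_fin]
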